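/- Let X = ℂ/Γ be a complex torus and f : X → ℙ¹ a holomorphic map of degree 3. If t ∈ X satisfies f(z − t) = f(z) for all z ∈ X, then t = 0. In other words, the translation action of X on degree-3 elliptic functions by pre-composition is free. -/

import Mathlib

open Filter

/-- The lattice `ω₁ℤ + ω₂ℤ` as a subset of `ℂ`. -/
def latticeOf (ω₁ ω₂ : ℂ) : Set ℂ :=
  {z : ℂ | ∃ m n : ℤ, z = (m : ℂ) * ω₁ + (n : ℂ) * ω₂}

/-- A fundamental domain for the torus `ℂ/(ω₁ℤ + ω₂ℤ)`. -/
def fundDomain (ω₁ ω₂ : ℂ) : Set ℂ :=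
  {z : ℂ | ∃ s t : ℝ, s ∈ Set.Ico (0 : ℝ) 1 ∧ t ∈ Set.Ico (0 : ℝ) 1 ∧
    z = (s : ℂ) * ω₁ + (t : ℂ) * ω₂}

/-- `f` has a pole at `p`. -/
def IsPole (f : ℂ → ℂ) (p : ℂ) : Prop :=
  Tendsto (fun z => ‖f z‖) (nhdsWithin p {p}ᶜ) atTop

/-- `f` has order `n` at `p`: near `p`, `f(z) = (z-p)^n g(z)` with `g`
analytic and nonvanishing at `p`. -/
def HasOrderAt (f : ℂ → ℂ) (p : ℂ) (n : ℤ) : Prop :=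
  ∃ g : ℂ → ℂ, AnalyticAt ℂ g p ∧ g p ≠ 0 ∧
    ∀ᶠ z in nhdsWithin p {p}ᶜ, f z = (z - p) ^ n * g z

/-- `f` is meromorphic on `ℂ` (with a well-defined finite order everywhere). -/
def MeroOn (f : ℂ → ℂ) : Prop := ∀ p : ℂ, ∃ n : ℤ, HasOrderAt f p n

open Classical in
/-- The order of `f` at `p` (junk value `0` if undefined). -/
noncomputable def orderAt (f : ℂ → ℂ) (p : ℂ) : ℤ :=
  if h : ∃ n : ℤ, HasOrderAt f p n then h.choose else 0

/-- `f` is a degree-`n` elliptic function for `ω₁ℤ + ω₂ℤ`: the total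
multiplicity of its poles in a fundamental domain is `n`. -/
def HasDegree (ω₁ ω₂ : ℂ) (f : ℂ → ℂ) (n : ℕ) : Prop :=
  ∃ P : Finset ℂ, (P : Set ℂ) = {z ∈ fundDomain ω₁ ω₂ | IsPole f z} ∧
    ∑ p ∈ P, (orderAt f p).natAbs = n

open Classical in
/-- The ramification index of `f` at `p`: the multiplicity with which `f`
attains its value (`∞` at poles) at `p`. -/
noncomputable def ramIndex (f : ℂ → ℂ) (p : ℂ) : ℕ :=
  if IsPole f p then (orderAt f p).natAbs
  else (orderAt (fun z => f z - f p) p).toNat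

open Topology

lemma hasOrderAt_le {f : ℂ → ℂ} {p : ℂ} {m n : ℤ}
    (hm : HasOrderAt f p m) (hn : HasOrderAt f p n) (hle : m ≤ n) : m = n := by
  by_contra hne
  have hlt : m < n := lt_of_le_of_ne hle hne
  obtain ⟨g₁, hg₁, hg₁p, e₁⟩ := hm
  obtain ⟨g₂, hg₂, hg₂p, e₂⟩ := hn
  set k : ℕ := (n - m).toNat with hk
  have hkpos : 0 < k := by omega
  have key : ∀ᶠ z in 𝓝[≠] p, g₁ z = (z - p) ^ k * g₂ z := by
    filter_upwards [e₁, e₂, self_mem_nhdsWithin] with z h1 h2 hz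
    have hzp : z - p ≠ 0 := sub_ne_zero.mpr hz
    have : (z - p) ^ m * g₁ z = (z - p) ^ m * ((z - p) ^ k * g₂ z) := by
      rw [h1.symm.trans h2]
      rw [← mul_assoc]
      congr 1
      rw [← zpow_natCast, ← zpow_add₀ hzp]
      congr 1
      omega
    exact mul_left_cancel₀ (zpow_ne_zero m hzp) this
  have t1 : Tendsto g₁ (𝓝[≠] p) (𝓝 (g₁ p)) :=
    (hg₁.continuousAt.continuousWithinAt).tendsto
  have t2 : Tendsto (fun z => (z - p) ^ k * g₂ z) (𝓝[≠] p) (𝓝 ((p - p) ^ k * g₂ p)) := by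
    apply Tendsto.mono_left _ nhdsWithin_le_nhds
    exact (((continuous_id.sub continuous_const).pow k).continuousAt).mul hg₂.continuousAt
  have t1' : Tendsto g₁ (𝓝[≠] p) (𝓝 ((p - p) ^ k * g₂ p)) := t2.congr' (key.mono fun z h => h.symm)
  have := tendsto_nhds_unique t1 t1'
  rw [sub_self, zero_pow hkpos.ne', zero_mul] at this
  exact hg₁p this

lemma hasOrderAt_unique {f : ℂ → ℂ} {p : ℂ} {m n : ℤ}
    (hm : HasOrderAt f p m) (hn : HasOrderAt f p n) : m = n := by
  rcases le_total m n with hle | hle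
  · exact hasOrderAt_le hm hn hle
  · exact (hasOrderAt_le hn hm hle).symm

lemma orderAt_eq {f : ℂ → ℂ} {p : ℂ} {n : ℤ} (hn : HasOrderAt f p n) : orderAt f p = n := by
  have h : ∃ n : ℤ, HasOrderAt f p n := ⟨n, hn⟩
  rw [orderAt, dif_pos h]
  exact hasOrderAt_unique h.choose_spec hn

lemma isPole_of_order_neg {f : ℂ → ℂ} {p : ℂ} {n : ℤ}
    (hn : HasOrderAt f p n) (hneg : n < 0) : IsPole f p := by
  obtain ⟨g, hg, hgp, e⟩ := hn
  set k : ℕ := (-n).toNat with hk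
  have hkpos : 0 < k := by omega
  have key : ∀ᶠ z in 𝓝[≠] p, ‖f z‖ = (‖z - p‖ ^ k)⁻¹ * ‖g z‖ := by
    filter_upwards [e, self_mem_nhdsWithin] with z h1 hz
    have hzp : z - p ≠ 0 := sub_ne_zero.mpr hz
    rw [h1, norm_mul]
    congr 1
    rw [show n = -(k : ℤ) by omega, zpow_neg, norm_inv, zpow_natCast, norm_pow]
  have t1 : Tendsto (fun z => (‖z - p‖ ^ k)⁻¹) (𝓝[≠] p) atTop := by
    apply tendsto_inv_nhdsGT_zero.comp
    rw [tendsto_nhdsWithin_iff]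
    constructor
    · apply Tendsto.mono_left _ nhdsWithin_le_nhds
      have : Tendsto (fun z : ℂ => ‖z - p‖ ^ k) (𝓝 p) (𝓝 (‖p - p‖ ^ k)) :=
        (((continuous_id.sub continuous_const).norm.pow k).continuousAt)
      simpa [sub_self, zero_pow hkpos.ne'] using this
    · filter_upwards [self_mem_nhdsWithin] with z hz
      exact Set.mem_Ioi.mpr (pow_pos (norm_pos_iff.mpr (sub_ne_zero.mpr hz)) k)
  have t2 : Tendsto (fun z => ‖g z‖) (𝓝[≠] p) (𝓝 ‖g p‖) :=
    ((hg.continuousAt.norm).continuousWithinAt).tendsto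
  have := t1.atTop_mul_pos (norm_pos_iff.mpr hgp) t2
  exact Tendsto.congr' (key.mono fun z h => h.symm) this

lemma not_isPole_of_order_nonneg {f : ℂ → ℂ} {p : ℂ} {n : ℤ}
    (hn : HasOrderAt f p n) (hpos : 0 ≤ n) : ¬ IsPole f p := by
  intro hp
  obtain ⟨g, hg, hgp, e⟩ := hn
  set k : ℕ := n.toNat with hk
  have key : ∀ᶠ z in 𝓝[≠] p, ‖f z‖ = ‖z - p‖ ^ k * ‖g z‖ := by
    filter_upwards [e] with z h1
    rw [h1, norm_mul, show n = (k : ℤ) by omega, zpow_natCast, norm_pow]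
  have t2 : Tendsto (fun z => ‖z - p‖ ^ k * ‖g z‖) (𝓝[≠] p) (𝓝 (‖p - p‖ ^ k * ‖g p‖)) := by
    apply Tendsto.mono_left _ nhdsWithin_le_nhds
    exact ((continuous_id.sub continuous_const).norm.pow k).continuousAt.mul
      hg.continuousAt.norm
  have t3 : Tendsto (fun z => ‖f z‖) (𝓝[≠] p) (𝓝 (‖p - p‖ ^ k * ‖g p‖)) :=
    t2.congr' (key.mono fun z h => h.symm)
  have h1 : ∀ᶠ z in 𝓝[≠] p, ‖f z‖ ≤ ‖p - p‖ ^ k * ‖g p‖ + 1 :=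
    t3.eventually (eventually_le_nhds (by linarith))
  have h2 : ∀ᶠ z in 𝓝[≠] p, ‖p - p‖ ^ k * ‖g p‖ + 1 < ‖f z‖ :=
    hp.eventually (eventually_gt_atTop _)
  obtain ⟨z, hz1, hz2⟩ := (h1.and h2).exists
  linarith

/-- the periods of `f` form an additive subgroup of `ℂ`. -/
noncomputable def periodGroup (f : ℂ → ℂ) : AddSubgroup ℂ where
  carrier := {a | ∀ z, f (z + a) = f z}
  zero_mem' := by simp
  add_mem' := by
    intro a b ha hb z
    rw [← add_assoc, hb, ha]
  neg_mem' := by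
    intro a ha z
    have := ha (z + -a)
    rw [add_assoc, neg_add_cancel, add_zero] at this
    exact this.symm

lemma mem_periodGroup {f : ℂ → ℂ} {a : ℂ} : a ∈ periodGroup f ↔ ∀ z, f (z + a) = f z :=
  Iff.rfl

lemma tendsto_sub_punct (p a : ℂ) :
    Tendsto (fun z => z - a) (𝓝[≠] (p + a)) (𝓝[≠] p) := by
  rw [tendsto_nhdsWithin_iff]
  constructor
  · apply Tendsto.mono_left _ nhdsWithin_le_nhds
    have : ContinuousAt (fun z : ℂ => z - a) (p + a) :=
      (continuous_id.sub continuous_const).continuousAt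
    simpa [ContinuousAt, add_sub_cancel_right] using this
  · filter_upwards [self_mem_nhdsWithin] with z hz
    simp only [Set.mem_compl_iff, Set.mem_singleton_iff] at hz ⊢
    intro hc; apply hz
    have : z = p + a := by linear_combination hc
    exact this

lemma tendsto_reflect_punct (q p : ℂ) :
    Tendsto (fun z => 2 * q - z) (𝓝[≠] p) (𝓝[≠] (2 * q - p)) := by
  rw [tendsto_nhdsWithin_iff]
  constructor
  · apply Tendsto.mono_left _ nhdsWithin_le_nhds
    exact (continuous_const.sub continuous_id).continuousAt
  · filter_upwards [self_mem_nhdsWithin] with z hz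
    simp only [Set.mem_compl_iff, Set.mem_singleton_iff] at hz ⊢
    intro hc; apply hz
    linear_combination -hc

lemma hasOrderAt_shift {f : ℂ → ℂ} {p a : ℂ} {n : ℤ}
    (ha : a ∈ periodGroup f) (h : HasOrderAt f p n) : HasOrderAt f (p + a) n := by
  obtain ⟨g, hg, hgp, e⟩ := h
  refine ⟨fun z => g (z - a), ?_, by simpa using hgp, ?_⟩
  · have h1 : AnalyticAt ℂ (fun z : ℂ => z - a) (p + a) := analyticAt_id.sub analyticAt_const
    exact (hg.comp_of_eq h1 (by ring) : AnalyticAt ℂ (g ∘ fun z => z - a) (p + a))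
  · filter_upwards [(tendsto_sub_punct p a).eventually e] with z hz
    have hz' : f z = f (z - a) := by
      have := ha (z - a); rw [sub_add_cancel] at this; exact this
    rw [hz', hz]
    have harith : z - a - p = z - (p + a) := by ring
    rw [harith]

lemma isPole_shift {f : ℂ → ℂ} {p a : ℂ}
    (ha : a ∈ periodGroup f) (h : IsPole f p) : IsPole f (p + a) := by
  have comp := h.comp (tendsto_sub_punct p a)
  apply comp.congr
  intro z
  simp only [Function.comp_apply]
  have := ha (z - a); rw [sub_add_cancel] at this; rw [this]

noncomputable def resAt (f : ℂ → ℂ) (p : ℂ) : ℂ :=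
  limUnder (𝓝[≠] p) (fun z => (z - p) * f z)

lemma resAt_eq {f : ℂ → ℂ} {p : ℂ} {g : ℂ → ℂ} (hg : AnalyticAt ℂ g p)
    (e : ∀ᶠ z in 𝓝[≠] p, f z = (z - p) ^ (-1 : ℤ) * g z) : resAt f p = g p := by
  apply Filter.Tendsto.limUnder_eq
  have t : Tendsto g (𝓝[≠] p) (𝓝 (g p)) := hg.continuousAt.continuousWithinAt.tendsto
  apply t.congr'
  filter_upwards [e, self_mem_nhdsWithin] with z hz hz'
  have hzp : z - p ≠ 0 := sub_ne_zero.mpr hz'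
  rw [hz]
  field_simp

lemma resAt_shift {f : ℂ → ℂ} {p a : ℂ} (ha : a ∈ periodGroup f)
    (h : HasOrderAt f p (-1)) : resAt f (p + a) = resAt f p := by
  obtain ⟨g, hg, hgp, e⟩ := h
  have h1 : AnalyticAt ℂ (fun z => g (z - a)) (p + a) := by
    have ha1 : AnalyticAt ℂ (fun z : ℂ => z - a) (p + a) := analyticAt_id.sub analyticAt_const
    exact (hg.comp_of_eq ha1 (by ring) : AnalyticAt ℂ (g ∘ fun z => z - a) (p + a))
  have e' : ∀ᶠ z in 𝓝[≠] (p + a), f z = (z - (p + a)) ^ (-1 : ℤ) * g (z - a) := by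
    filter_upwards [(tendsto_sub_punct p a).eventually e] with z hz
    have hz' : f z = f (z - a) := by
      have := ha (z - a); rw [sub_add_cancel] at this; exact this
    rw [hz', hz]
    have harith : z - a - p = z - (p + a) := by ring
    rw [harith]
  rw [resAt_eq h1 e', resAt_eq hg e]
  simp [add_sub_cancel_right]

lemma analyticAt_of_not_pole {f : ℂ → ℂ} {p : ℂ} (hf : MeroOn f)
    (hc : ContinuousAt f p) (hp : ¬ IsPole f p) : AnalyticAt ℂ f p := by
  obtain ⟨n, hn⟩ := hf p
  have hn0 : 0 ≤ n := by
    by_contra hneg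
    exact hp (isPole_of_order_neg hn (by omega))
  obtain ⟨g, hg, hgp, e⟩ := hn
  set h : ℂ → ℂ := fun z => (z - p) ^ n.toNat * g z with hh
  have hha : AnalyticAt ℂ h p := ((analyticAt_id.sub analyticAt_const).pow _).mul hg
  have e' : ∀ᶠ z in 𝓝[≠] p, f z = h z := by
    filter_upwards [e] with z hz
    have hzp : (z - p) ^ n = (z - p) ^ n.toNat := by
      rw [← zpow_natCast, Int.toNat_of_nonneg hn0]
    rw [hz, hh, hzp]
  have hfp : f p = h p := by
    have t1 : Tendsto f (𝓝[≠] p) (𝓝 (f p)) := hc.continuousWithinAt.tendsto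
    have t2 : Tendsto f (𝓝[≠] p) (𝓝 (h p)) :=
      (hha.continuousAt.continuousWithinAt.tendsto).congr' (e'.mono fun z hz => hz.symm)
    exact tendsto_nhds_unique t1 t2
  have efull : f =ᶠ[𝓝 p] h := by
    have : ∀ᶠ z in 𝓝[≠] p ⊔ pure p, f z = h z := by
      rw [eventually_sup]
      exact ⟨e', by simpa using hfp⟩
    exact (nhdsNE_sup_pure p) ▸ this
  exact hha.congr efull.symm

section Coord
variable {ω₁ ω₂ : ℂ}

noncomputable def coB (h : LinearIndependent ℝ ![ω₁, ω₂]) : Module.Basis (Fin 2) ℝ ℂ :=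
  basisOfLinearIndependentOfCardEqFinrank h
    (by simp [Complex.finrank_real_complex])

noncomputable def cX (h : LinearIndependent ℝ ![ω₁, ω₂]) : ℂ →ₗ[ℝ] ℝ := (coB h).coord 0
noncomputable def cY (h : LinearIndependent ℝ ![ω₁, ω₂]) : ℂ →ₗ[ℝ] ℝ := (coB h).coord 1

lemma coB_zero (h : LinearIndependent ℝ ![ω₁, ω₂]) : coB h 0 = ω₁ := by
  rw [coB, coe_basisOfLinearIndependentOfCardEqFinrank]; rfl

lemma coB_one (h : LinearIndependent ℝ ![ω₁, ω₂]) : coB h 1 = ω₂ := by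
  rw [coB, coe_basisOfLinearIndependentOfCardEqFinrank]; rfl

lemma repr_omega1 (h : LinearIndependent ℝ ![ω₁, ω₂]) :
    (coB h).repr ω₁ = Finsupp.single 0 1 := by
  have := (coB h).repr_self 0
  rwa [coB_zero h] at this

lemma repr_omega2 (h : LinearIndependent ℝ ![ω₁, ω₂]) :
    (coB h).repr ω₂ = Finsupp.single 1 1 := by
  have := (coB h).repr_self 1
  rwa [coB_one h] at this

lemma coord_spec (h : LinearIndependent ℝ ![ω₁, ω₂]) (z : ℂ) :
    z = (cX h z : ℂ) * ω₁ + (cY h z : ℂ) * ω₂ := by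
  have hs := (coB h).sum_repr z
  rw [Fin.sum_univ_two, coB_zero h, coB_one h] at hs
  rw [cX, cY, Module.Basis.coord_apply, Module.Basis.coord_apply, ← Complex.real_smul, ← Complex.real_smul]
  exact hs.symm

lemma cX_apply (h : LinearIndependent ℝ ![ω₁, ω₂]) (s t : ℝ) :
    cX h ((s : ℂ) * ω₁ + (t : ℂ) * ω₂) = s := by
  rw [← Complex.real_smul, ← Complex.real_smul, map_add, map_smul, map_smul]
  have h1 : cX h ω₁ = 1 := by rw [cX, Module.Basis.coord_apply, repr_omega1 h]; simp
  have h2 : cX h ω₂ = 0 := by rw [cX, Module.Basis.coord_apply, repr_omega2 h]; simp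
  rw [h1, h2]; simp

lemma cY_apply (h : LinearIndependent ℝ ![ω₁, ω₂]) (s t : ℝ) :
    cY h ((s : ℂ) * ω₁ + (t : ℂ) * ω₂) = t := by
  rw [← Complex.real_smul, ← Complex.real_smul, map_add, map_smul, map_smul]
  have h1 : cY h ω₁ = 0 := by rw [cY, Module.Basis.coord_apply, repr_omega1 h]; simp
  have h2 : cY h ω₂ = 1 := by rw [cY, Module.Basis.coord_apply, repr_omega2 h]; simp
  rw [h1, h2]; simp

lemma mem_fundDomain_iff (h : LinearIndependent ℝ ![ω₁, ω₂]) (z : ℂ) :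
    z ∈ fundDomain ω₁ ω₂ ↔ cX h z ∈ Set.Ico (0:ℝ) 1 ∧ cY h z ∈ Set.Ico (0:ℝ) 1 := by
  constructor
  · rintro ⟨s, u, hs, hu, rfl⟩
    rw [cX_apply h, cY_apply h]
    exact ⟨hs, hu⟩
  · rintro ⟨h1, h2⟩
    exact ⟨cX h z, cY h z, h1, h2, coord_spec h z⟩

lemma mem_latticeOf_iff (h : LinearIndependent ℝ ![ω₁, ω₂]) (z : ℂ) :
    z ∈ latticeOf ω₁ ω₂ ↔ (∃ m : ℤ, cX h z = m) ∧ (∃ n : ℤ, cY h z = n) := by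
  constructor
  · rintro ⟨m, n, rfl⟩
    have e1 : ((m : ℂ)) = ((m : ℝ) : ℂ) := by push_cast; ring
    have e2 : ((n : ℂ)) = ((n : ℝ) : ℂ) := by push_cast; ring
    rw [e1, e2, cX_apply h, cY_apply h]
    exact ⟨⟨m, rfl⟩, ⟨n, rfl⟩⟩
  · rintro ⟨⟨m, hm⟩, ⟨n, hn⟩⟩
    refine ⟨m, n, ?_⟩
    have hc := coord_spec h z
    rw [hm, hn] at hc
    rw [hc]
    push_cast
    ring

noncomputable def reduce (h : LinearIndependent ℝ ![ω₁, ω₂]) (z : ℂ) : ℂ :=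
  ((Int.fract (cX h z) : ℝ) : ℂ) * ω₁ + ((Int.fract (cY h z) : ℝ) : ℂ) * ω₂

lemma reduce_mem (h : LinearIndependent ℝ ![ω₁, ω₂]) (z : ℂ) :
    reduce h z ∈ fundDomain ω₁ ω₂ :=
  ⟨_, _, ⟨Int.fract_nonneg _, Int.fract_lt_one _⟩, ⟨Int.fract_nonneg _, Int.fract_lt_one _⟩, rfl⟩

lemma sub_reduce_mem (h : LinearIndependent ℝ ![ω₁, ω₂]) (z : ℂ) :
    z - reduce h z ∈ latticeOf ω₁ ω₂ := by
  refine ⟨⌊cX h z⌋, ⌊cY h z⌋, ?_⟩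
  have hz := coord_spec h z
  have e1 : ((Int.fract (cX h z) : ℝ) : ℂ) = ((cX h z : ℝ) : ℂ) - ((⌊cX h z⌋ : ℝ) : ℂ) := by
    rw [← Int.self_sub_floor]; push_cast; ring
  have e2 : ((Int.fract (cY h z) : ℝ) : ℂ) = ((cY h z : ℝ) : ℂ) - ((⌊cY h z⌋ : ℝ) : ℂ) := by
    rw [← Int.self_sub_floor]; push_cast; ring
  rw [reduce, e1, e2]
  push_cast
  linear_combination hz

lemma fundDomain_unique (h : LinearIndependent ℝ ![ω₁, ω₂]) {a b : ℂ}
    (ha : a ∈ fundDomain ω₁ ω₂) (hb : b ∈ fundDomain ω₁ ω₂)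
    (hab : a - b ∈ latticeOf ω₁ ω₂) : a = b := by
  rw [mem_fundDomain_iff h] at ha hb
  rw [mem_latticeOf_iff h] at hab
  obtain ⟨⟨m, hm⟩, ⟨n, hn⟩⟩ := hab
  rw [map_sub] at hm hn
  obtain ⟨⟨ha1, ha2⟩, ⟨ha3, ha4⟩⟩ := ha
  obtain ⟨⟨hb1, hb2⟩, ⟨hb3, hb4⟩⟩ := hb
  have hm0 : m = 0 := by
    have l1 : (-1 : ℝ) < m := by rw [← hm]; linarith
    have l2 : (m : ℝ) < 1 := by rw [← hm]; linarith
    have l1' : (-1 : ℤ) < m := by exact_mod_cast l1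
    have l2' : m < (1 : ℤ) := by exact_mod_cast l2
    omega
  have hn0 : n = 0 := by
    have l1 : (-1 : ℝ) < n := by rw [← hn]; linarith
    have l2 : (n : ℝ) < 1 := by rw [← hn]; linarith
    have l1' : (-1 : ℤ) < n := by exact_mod_cast l1
    have l2' : n < (1 : ℤ) := by exact_mod_cast l2
    omega
  have ex : cX h a = cX h b := by
    rw [hm0] at hm; push_cast at hm; linarith
  have ey : cY h a = cY h b := by
    rw [hn0] at hn; push_cast at hn; linarith
  rw [coord_spec h a, coord_spec h b, ex, ey]
end Coord

/-- A doubly periodic function with removable singularities everywhere is constant: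
its value at every continuity point is the same. -/
lemma periodic_extendable_const {ω₁ ω₂ : ℂ} (h : LinearIndependent ℝ ![ω₁, ω₂]) (u : ℂ → ℂ)
    (hp1 : ∀ z, u (z + ω₁) = u z) (hp2 : ∀ z, u (z + ω₂) = u z)
    (hu : ∀ z : ℂ, ∃ w : ℂ → ℂ, AnalyticAt ℂ w z ∧ ∀ᶠ x in 𝓝[≠] z, u x = w x) :
    ∃ c : ℂ, ∀ z : ℂ, ContinuousAt u z → u z = c := by
  classical
  set V : ℂ → ℂ := fun z => limUnder (𝓝[≠] z) u with hV
  -- basic: u tends to V z along the punctured filter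
  have key : ∀ z : ℂ, Tendsto u (𝓝[≠] z) (𝓝 (V z)) := by
    intro z
    obtain ⟨w, hw, he⟩ := hu z
    have t : Tendsto u (𝓝[≠] z) (𝓝 (w z)) := by
      apply (hw.continuousAt.continuousWithinAt.tendsto).congr'
      exact he.mono fun x hx => hx.symm
    have : V z = w z := t.limUnder_eq
    rw [this]; exact t
  -- V is analytic everywhere
  have hVa : ∀ z : ℂ, AnalyticAt ℂ V z := by
    intro z
    obtain ⟨w, hw, he⟩ := hu z
    have hVz : V z = w z := by
      have t : Tendsto u (𝓝[≠] z) (𝓝 (w z)) := by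
        apply (hw.continuousAt.continuousWithinAt.tendsto).congr'
        exact he.mono fun x hx => hx.symm
      exact t.limUnder_eq
    -- get an open set where u = w off z and w is analytic
    have h1 : ∀ᶠ x in 𝓝 z, x ∈ ({z}ᶜ : Set ℂ) → u x = w x :=
      eventually_nhdsWithin_iff.mp he
    obtain ⟨s, hs, hso, hsz⟩ := eventually_nhds_iff.mp (h1.and hw.eventually_analyticAt)
    have hVeq : ∀ x ∈ s, V x = w x := by
      intro x hx
      by_cases hxz : x = z
      · rw [hxz]; exact hVz
      · have hwx : AnalyticAt ℂ w x := (hs x hx).2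
        have t : Tendsto u (𝓝[≠] x) (𝓝 (w x)) := by
          apply (hwx.continuousAt.continuousWithinAt.tendsto).congr'
          have hsx : s ∈ 𝓝 x := hso.mem_nhds hx
          have hzx : {z}ᶜ ∈ 𝓝 x := isOpen_compl_singleton.mem_nhds (by simpa using hxz)
          filter_upwards [nhdsWithin_le_nhds hsx, nhdsWithin_le_nhds hzx] with y hy1 hy2
          exact ((hs y hy1).1 (by simpa using hy2)).symm
        exact t.limUnder_eq
    have : V =ᶠ[𝓝 z] w := by
      filter_upwards [hso.mem_nhds hsz] with x hx using hVeq x hx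
    exact hw.congr this.symm
  -- V is doubly periodic
  have hVper : ∀ a : ℂ, (∀ z, u (z + a) = u z) → ∀ z, V (z + a) = V z := by
    intro a ha z
    have t1 : Tendsto u (𝓝[≠] (z + a)) (𝓝 (V (z + a))) := key (z + a)
    have t2 : Tendsto (fun x => u (x - a)) (𝓝[≠] (z + a)) (𝓝 (V z)) :=
      (key z).comp (tendsto_sub_punct z a)
    have : Tendsto u (𝓝[≠] (z + a)) (𝓝 (V z)) := by
      apply t2.congr
      intro x
      have := ha (x - a); rw [sub_add_cancel] at this; exact this.symm
    exact tendsto_nhds_unique t1 this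
  -- V is bounded
  have hVc : Continuous V := by
    apply continuous_iff_continuousAt.mpr
    intro z; exact (hVa z).continuousAt
  set K : Set ℂ := (fun p : ℝ × ℝ => ((p.1 : ℝ) : ℂ) * ω₁ + ((p.2 : ℝ) : ℂ) * ω₂) ''
    (Set.Icc 0 1 ×ˢ Set.Icc 0 1) with hK
  have hKc : IsCompact K := by
    apply (isCompact_Icc.prod isCompact_Icc).image
    continuity
  obtain ⟨C, hC⟩ := hKc.exists_bound_of_continuousOn hVc.continuousOn
  have hbound : ∀ z, ‖V z‖ ≤ C := by
    intro z
    have h1 : z - reduce h z ∈ latticeOf ω₁ ω₂ := sub_reduce_mem h z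
    obtain ⟨m, n, hmn⟩ := h1
    have hper : (m : ℂ) * ω₁ + (n : ℂ) * ω₂ ∈ periodGroup V := by
      have e1 : (m : ℂ) * ω₁ = m • ω₁ := (zsmul_eq_mul ω₁ m).symm
      have e2 : (n : ℂ) * ω₂ = n • ω₂ := (zsmul_eq_mul ω₂ n).symm
      rw [e1, e2]
      have m1 : ω₁ ∈ periodGroup V := hVper ω₁ hp1
      have m2 : ω₂ ∈ periodGroup V := hVper ω₂ hp2
      exact AddSubgroup.add_mem _ (AddSubgroup.zsmul_mem _ m1 m)
        (AddSubgroup.zsmul_mem _ m2 n)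
    have hz : V z = V (reduce h z) := by
      have := hper (reduce h z)
      rw [← this]
      congr 1
      linear_combination hmn
    rw [hz]
    apply hC
    obtain ⟨s, t, hs, ht, he⟩ := reduce_mem h z
    exact ⟨(s, t), ⟨Set.mem_prod.mpr ⟨Set.Ico_subset_Icc_self hs, Set.Ico_subset_Icc_self ht⟩, he.symm⟩⟩
  -- Liouville
  have hVd : Differentiable ℂ V := fun z => (hVa z).differentiableAt
  have hrange : Bornology.IsBounded (Set.range V) := by
    rw [isBounded_iff_forall_norm_le]
    exact ⟨C, by rintro x ⟨z, rfl⟩; exact hbound z⟩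
  refine ⟨V 0, fun z hz => ?_⟩
  have h1 : V z = V 0 := hVd.apply_eq_apply_of_bounded hrange z 0
  have h2 : u z = V z := by
    have t1 : Tendsto u (𝓝[≠] z) (𝓝 (u z)) := hz.continuousWithinAt.tendsto
    exact tendsto_nhds_unique t1 (key z)
  rw [h2, h1]

lemma removable_aux {u : ℂ → ℂ} {p : ℂ} {h : ℂ → ℂ}
    (hh : AnalyticAt ℂ h p) (hp0 : h p = 0)
    (e : ∀ᶠ z in 𝓝[≠] p, u z = (z - p)⁻¹ * h z) :
    ∃ w : ℂ → ℂ, AnalyticAt ℂ w p ∧ ∀ᶠ x in 𝓝[≠] p, u x = w x := by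
  rcases eq_or_ne (analyticOrderAt h p) ⊤ with ho | ho
  · have hz : ∀ᶠ z in 𝓝 p, h z = 0 := analyticOrderAt_eq_top.mp ho
    refine ⟨0, analyticAt_const, ?_⟩
    filter_upwards [e, nhdsWithin_le_nhds hz] with z h1 h2
    simp [h1, h2]
  · obtain ⟨n, hn'⟩ := WithTop.ne_top_iff_exists.mp ho
    have hn : analyticOrderAt h p = (n : ℕ∞) := hn'.symm
    obtain ⟨g, hg, hgp, hhe⟩ := hh.analyticOrderAt_eq_natCast.mp hn
    have hn0 : n ≠ 0 := by
      intro h0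
      apply hgp
      have := hhe.self_of_nhds
      rw [h0, pow_zero, one_smul] at this
      rw [← this, hp0]
    refine ⟨fun z => (z - p) ^ (n - 1) * g z, ?_, ?_⟩
    · exact ((analyticAt_id.sub analyticAt_const).pow _).mul hg
    · filter_upwards [e, nhdsWithin_le_nhds hhe, self_mem_nhdsWithin] with z h1 h2 hz
      have hzp : z - p ≠ 0 := sub_ne_zero.mpr hz
      rw [h1, h2, smul_eq_mul]
      rw [show n = (n - 1) + 1 by omega, pow_succ]
      field_simp
      rw [Nat.add_sub_cancel]
      ring

lemma tendsto_add_punct (p a : ℂ) :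
    Tendsto (fun z => z + a) (𝓝[≠] p) (𝓝[≠] (p + a)) := by
  rw [tendsto_nhdsWithin_iff]
  constructor
  · apply Tendsto.mono_left _ nhdsWithin_le_nhds
    exact (continuous_id.add continuous_const).continuousAt
  · filter_upwards [self_mem_nhdsWithin] with z hz
    simp only [Set.mem_compl_iff, Set.mem_singleton_iff] at hz ⊢
    intro hc; apply hz; linear_combination hc

def Tlat (ω₁ ω₂ t : ℂ) : Set ℂ :=
  {z | ∃ m n k : ℤ, z = (m : ℂ) * ω₁ + (n : ℂ) * ω₂ + (k : ℂ) * t}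

namespace Tlat
variable {ω₁ ω₂ t : ℂ}

lemma zero_mem : (0 : ℂ) ∈ Tlat ω₁ ω₂ t := ⟨0, 0, 0, by push_cast; ring⟩

lemma neg_mem {z : ℂ} (hz : z ∈ Tlat ω₁ ω₂ t) : -z ∈ Tlat ω₁ ω₂ t := by
  obtain ⟨m, n, k, rfl⟩ := hz
  exact ⟨-m, -n, -k, by push_cast; ring⟩

lemma add_mem {z w : ℂ} (hz : z ∈ Tlat ω₁ ω₂ t) (hw : w ∈ Tlat ω₁ ω₂ t) :
    z + w ∈ Tlat ω₁ ω₂ t := by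
  obtain ⟨m, n, k, rfl⟩ := hz
  obtain ⟨m', n', k', rfl⟩ := hw
  exact ⟨m + m', n + n', k + k', by push_cast; ring⟩

lemma sub_mem {z w : ℂ} (hz : z ∈ Tlat ω₁ ω₂ t) (hw : w ∈ Tlat ω₁ ω₂ t) :
    z - w ∈ Tlat ω₁ ω₂ t := by
  have := add_mem hz (neg_mem hw); rwa [← sub_eq_add_neg] at this

lemma omega1_mem : ω₁ ∈ Tlat ω₁ ω₂ t := ⟨1, 0, 0, by push_cast; ring⟩

lemma period {f : ℂ → ℂ} (hω₁ : ω₁ ∈ periodGroup f) (hω₂ : ω₂ ∈ periodGroup f)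
    (ht : t ∈ periodGroup f) {x : ℂ} (hx : x ∈ Tlat ω₁ ω₂ t) : x ∈ periodGroup f := by
  obtain ⟨m, n, k, rfl⟩ := hx
  have e1 : (m : ℂ) * ω₁ = m • ω₁ := (zsmul_eq_mul ω₁ m).symm
  have e2 : (n : ℂ) * ω₂ = n • ω₂ := (zsmul_eq_mul ω₂ n).symm
  have e3 : (k : ℂ) * t = k • t := (zsmul_eq_mul t k).symm
  rw [e1, e2, e3]
  exact AddSubgroup.add_mem _ (AddSubgroup.add_mem _ (AddSubgroup.zsmul_mem _ hω₁ m)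
    (AddSubgroup.zsmul_mem _ hω₂ n)) (AddSubgroup.zsmul_mem _ ht k)

lemma parity {a b : ℤ} (h : LinearIndependent ℝ ![ω₁, ω₂])
    (h3t : (3 : ℂ) * t = (a : ℂ) * ω₁ + (b : ℂ) * ω₂)
    (α β : ℤ) (hodd : ¬ (2 ∣ α) ∨ ¬ (2 ∣ β)) :
    ((α : ℂ) * ω₁ + (β : ℂ) * ω₂) / 2 ∉ Tlat ω₁ ω₂ t := by
  rintro ⟨m, n, k, he⟩
  have E6 : (((3 * α : ℤ) : ℝ) : ℂ) * ω₁ + (((3 * β : ℤ) : ℝ) : ℂ) * ω₂ =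
      (((6 * m + 2 * k * a : ℤ) : ℝ) : ℂ) * ω₁ + (((6 * n + 2 * k * b : ℤ) : ℝ) : ℂ) * ω₂ := by
    push_cast
    linear_combination (6 : ℂ) * he + 2 * (k : ℂ) * h3t
  have hX := congrArg (cX h) E6
  rw [cX_apply h, cX_apply h] at hX
  have hY := congrArg (cY h) E6
  rw [cY_apply h, cY_apply h] at hY
  have hX' : 3 * α = 6 * m + 2 * k * a := by exact_mod_cast hX
  have hY' : 3 * β = 6 * n + 2 * k * b := by exact_mod_cast hY
  rcases hodd with hα | hβ
  · have h2 : 2 ∣ 3 * α := ⟨3 * m + k * a, by linarith⟩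
    omega
  · have h2 : 2 ∣ 3 * β := ⟨3 * n + k * b, by linarith⟩
    omega

end Tlat

lemma no_simple_lattice_poles {ω₁ ω₂ t q : ℂ} (h : LinearIndependent ℝ ![ω₁, ω₂])
    (f : ℂ → ℂ) (hf : MeroOn f) (hcont : ∀ p, ¬ IsPole f p → ContinuousAt f p)
    (hω₁ : ω₁ ∈ periodGroup f) (hω₂ : ω₂ ∈ periodGroup f) (htper : t ∈ periodGroup f)
    {a b : ℤ} (h3t : (3 : ℂ) * t = (a : ℂ) * ω₁ + (b : ℂ) * ω₂)
    (hpole : ∀ z : ℂ, IsPole f z ↔ z - q ∈ Tlat ω₁ ω₂ t)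
    (hord : ∀ z : ℂ, IsPole f z → HasOrderAt f z (-1)) : False := by
  classical
  have hTper : ∀ x ∈ Tlat ω₁ ω₂ t, x ∈ periodGroup f :=
    fun x hx => Tlat.period hω₁ hω₂ htper hx
  have hOrdT : ∀ z : ℂ, z - q ∈ Tlat ω₁ ω₂ t → HasOrderAt f z (-1) :=
    fun z hz => hord z ((hpole z).mpr hz)
  have hanal : ∀ z : ℂ, z - q ∉ Tlat ω₁ ω₂ t → AnalyticAt ℂ f z := by
    intro z hz
    have hnp : ¬ IsPole f z := fun hp => hz ((hpole z).mp hp)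
    exact analyticAt_of_not_pole hf (hcont z hnp) hnp
  have hreflT : ∀ z : ℂ, (2 * q - z) - q ∈ Tlat ω₁ ω₂ t → z - q ∈ Tlat ω₁ ω₂ t := by
    intro z hm
    have := Tlat.neg_mem hm
    rwa [show -((2 * q - z) - q) = z - q by ring] at this
  have hresq : ∀ z : ℂ, z - q ∈ Tlat ω₁ ω₂ t → resAt f z = resAt f q := by
    intro z hz
    have := resAt_shift (hTper _ hz) (hOrdT q (by simpa using (Tlat.zero_mem (ω₁ := ω₁) (ω₂ := ω₂) (t := t))))
    rwa [show q + (z - q) = z by ring] at this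
  -- the symmetrized function u
  set u : ℂ → ℂ := fun z => f z + f (2 * q - z) with hu_def
  have hu_per : ∀ x ∈ periodGroup f, ∀ z, u (z + x) = u z := by
    intro x hx z
    have h1 : f (z + x) = f z := hx z
    have h2 : f (2 * q - (z + x)) = f (2 * q - z) := by
      have hnx := (periodGroup f).neg_mem hx
      have h3 := hnx (2 * q - z)
      rwa [show 2 * q - z + -x = 2 * q - (z + x) by ring] at h3
    simp only [hu_def]
    rw [h1, h2]
  have hu_loc : ∀ z : ℂ, ∃ w : ℂ → ℂ, AnalyticAt ℂ w z ∧ ∀ᶠ x in 𝓝[≠] z, u x = w x := by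
    intro z
    by_cases hz : z - q ∈ Tlat ω₁ ω₂ t
    · obtain ⟨g₁, hg₁, hg₁0, e₁⟩ := hOrdT z hz
      have hz' : (2 * q - z) - q ∈ Tlat ω₁ ω₂ t := by
        have := Tlat.neg_mem hz
        rwa [show -(z - q) = (2 * q - z) - q by ring] at this
      obtain ⟨g₂, hg₂, hg₂0, e₂⟩ := hOrdT (2 * q - z) hz'
      have hrr : g₁ z - g₂ (2 * q - z) = 0 := by
        have r1 : resAt f z = g₁ z := resAt_eq hg₁ e₁
        have r2 : resAt f (2 * q - z) = g₂ (2 * q - z) := resAt_eq hg₂ e₂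
        rw [← r1, ← r2, hresq z hz, hresq _ hz']
        ring
      have hg₂' : AnalyticAt ℂ (fun x => g₂ (2 * q - x)) z := by
        have h1 : AnalyticAt ℂ (fun x : ℂ => 2 * q - x) z := analyticAt_const.sub analyticAt_id
        exact (hg₂.comp_of_eq h1 rfl : AnalyticAt ℂ (g₂ ∘ fun x => 2 * q - x) z)
      have hha : AnalyticAt ℂ (fun x => g₁ x - g₂ (2 * q - x)) z := hg₁.sub hg₂'
      have e : ∀ᶠ x in 𝓝[≠] z, u x = (x - z)⁻¹ * (g₁ x - g₂ (2 * q - x)) := by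
        filter_upwards [e₁, (tendsto_reflect_punct q z).eventually e₂] with x hx1 hx2
        simp only [hu_def]
        rw [hx1, hx2]
        rw [show 2 * q - x - (2 * q - z) = -(x - z) by ring]
        rw [zpow_neg_one, zpow_neg_one, inv_neg]
        ring
      exact removable_aux hha (by simpa using hrr) e
    · refine ⟨u, ?_, Eventually.of_forall fun _ => rfl⟩
      have h1 : AnalyticAt ℂ f z := hanal z hz
      have h2 : AnalyticAt ℂ (fun x => f (2 * q - x)) z := by
        have h3 : AnalyticAt ℂ f (2 * q - z) := hanal _ (fun hm => hz (hreflT z hm))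
        have h4 : AnalyticAt ℂ (fun x : ℂ => 2 * q - x) z := analyticAt_const.sub analyticAt_id
        exact (h3.comp_of_eq h4 rfl : AnalyticAt ℂ (f ∘ fun x => 2 * q - x) z)
      exact h1.add h2
  obtain ⟨c, hc⟩ := periodic_extendable_const h u (hu_per ω₁ hω₁) (hu_per ω₂ hω₂) hu_loc
  -- the zeros at half periods
  have hzero : ∀ μ : ℂ, 2 * μ ∈ Tlat ω₁ ω₂ t → μ ∉ Tlat ω₁ ω₂ t → f (q + μ) = c / 2 := by
    intro μ h2μ hμ
    have hqm : (q - μ) - q ∉ Tlat ω₁ ω₂ t := by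
      intro hm
      apply hμ
      have := Tlat.neg_mem hm
      rwa [show -((q - μ) - q) = μ by ring] at this
    have hqp : (q + μ) - q ∉ Tlat ω₁ ω₂ t := by
      intro hm; apply hμ; rwa [show (q + μ) - q = μ by ring] at hm
    have c1 : ContinuousAt f (q - μ) := hcont _ (fun hp => hqm ((hpole _).mp hp))
    have c2 : ContinuousAt (fun x => f (2 * q - x)) (q - μ) := by
      have h3 : ContinuousAt f (2 * q - (q - μ)) := by
        refine hcont _ (fun hp => hqp ?_)
        have := (hpole _).mp hp
        rwa [show 2 * q - (q - μ) - q = (q + μ) - q by ring] at this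
      have h4 : ContinuousAt (fun x : ℂ => 2 * q - x) (q - μ) :=
        (continuous_const.sub continuous_id).continuousAt
      exact ContinuousAt.comp h3 h4
    have hval : u (q - μ) = c := hc _ (c1.add c2)
    have hswap : f (q - μ) = f (q + μ) := by
      have h5 := hTper _ h2μ (q - μ)
      rw [show q - μ + 2 * μ = q + μ by ring] at h5
      exact h5.symm
    have hfin : f (q + μ) + f (q + μ) = c := by
      have h6 : f (q - μ) + f (2 * q - (q - μ)) = c := hval
      rwa [show 2 * q - (q - μ) = q + μ by ring, hswap] at h6
    linear_combination hfin / 2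
  -- shifted function and its product
  set fs : ℂ → ℂ := fun z => f z - c / 2 with hfs_def
  have hω₁2 : ω₁ / 2 ∉ Tlat ω₁ ω₂ t := by
    have := Tlat.parity h h3t 1 0 (by left; decide)
    have e : (((1 : ℤ) : ℂ) * ω₁ + ((0 : ℤ) : ℂ) * ω₂) / 2 = ω₁ / 2 := by push_cast; ring
    rwa [e] at this
  have hω₂2 : ω₂ / 2 ∉ Tlat ω₁ ω₂ t := by
    have := Tlat.parity h h3t 0 1 (by right; decide)
    have e : (((0 : ℤ) : ℂ) * ω₁ + ((1 : ℤ) : ℂ) * ω₂) / 2 = ω₂ / 2 := by push_cast; ring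
    rwa [e] at this
  have hω₁₂2 : (ω₁ + ω₂) / 2 ∉ Tlat ω₁ ω₂ t := by
    have := Tlat.parity h h3t 1 1 (by left; decide)
    have e : (((1 : ℤ) : ℂ) * ω₁ + ((1 : ℤ) : ℂ) * ω₂) / 2 = (ω₁ + ω₂) / 2 := by push_cast; ring
    rwa [e] at this
  have hfs0 : ∀ μ : ℂ, 2 * μ ∈ Tlat ω₁ ω₂ t → μ ∉ Tlat ω₁ ω₂ t → fs (q + μ) = 0 := by
    intro μ h1 h2
    simp only [hfs_def]
    rw [hzero μ h1 h2]
    ring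
  set K : ℂ → ℂ := fun z => fs z * fs (z + ω₁ / 2) with hK_def
  have hfs_per : ∀ x ∈ periodGroup f, ∀ z, fs (z + x) = fs z := by
    intro x hx z; simp only [hfs_def]; rw [hx z]
  have hK_per : ∀ x ∈ periodGroup f, ∀ z, K (z + x) = K z := by
    intro x hx z
    simp only [hK_def]
    rw [hfs_per x hx z, show z + x + ω₁ / 2 = (z + ω₁ / 2) + x by ring, hfs_per x hx _]
  have hfs_anal : ∀ z : ℂ, z - q ∉ Tlat ω₁ ω₂ t → AnalyticAt ℂ fs z :=
    fun z hz => (hanal z hz).sub analyticAt_const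
  have hfs_shift_anal : ∀ z : ℂ, (z + ω₁ / 2) - q ∉ Tlat ω₁ ω₂ t →
      AnalyticAt ℂ (fun x => fs (x + ω₁ / 2)) z := by
    intro z hz
    have h3 := hfs_anal _ hz
    have h4 : AnalyticAt ℂ (fun x : ℂ => x + ω₁ / 2) z := analyticAt_id.add analyticAt_const
    exact (h3.comp_of_eq h4 rfl : AnalyticAt ℂ (fs ∘ fun x => x + ω₁ / 2) z)
  have hfs_rep : ∀ p : ℂ, p - q ∈ Tlat ω₁ ω₂ t → ∃ G : ℂ → ℂ, AnalyticAt ℂ G p ∧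
      ∀ᶠ x in 𝓝[≠] p, fs x = (x - p)⁻¹ * G x := by
    intro p hp
    obtain ⟨g, hg, hg0, e⟩ := hOrdT p hp
    refine ⟨fun x => g x - c / 2 * (x - p),
      hg.sub (analyticAt_const.mul (analyticAt_id.sub analyticAt_const)), ?_⟩
    filter_upwards [e, self_mem_nhdsWithin] with x hx hxne
    have hxp : x - p ≠ 0 := sub_ne_zero.mpr hxne
    simp only [hfs_def]
    rw [hx, zpow_neg_one]
    field_simp
  -- vanishing of fs at pole-plus-half-period points
  have hvan1 : ∀ z : ℂ, z - q ∈ Tlat ω₁ ω₂ t → fs (z + ω₁ / 2) = 0 := by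
    intro z hz
    have := hfs0 ((z - q) + ω₁ / 2) ?_ ?_
    · rwa [show q + ((z - q) + ω₁ / 2) = z + ω₁ / 2 by ring] at this
    · rw [show 2 * ((z - q) + ω₁ / 2) = ((z - q) + (z - q)) + ω₁ by ring]
      exact Tlat.add_mem (Tlat.add_mem hz hz) Tlat.omega1_mem
    · intro hm
      apply hω₁2
      have := Tlat.sub_mem hm hz
      rwa [show (z - q) + ω₁ / 2 - (z - q) = ω₁ / 2 by ring] at this
  have hvan2 : ∀ z : ℂ, (z + ω₁ / 2) - q ∈ Tlat ω₁ ω₂ t → fs z = 0 := by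
    intro z hz
    have := hfs0 (z - q) ?_ ?_
    · rwa [show q + (z - q) = z by ring] at this
    · rw [show 2 * (z - q) = (((z + ω₁ / 2) - q) + ((z + ω₁ / 2) - q)) - ω₁ by ring]
      exact Tlat.sub_mem (Tlat.add_mem hz hz) Tlat.omega1_mem
    · intro hm
      apply hω₁2
      have := Tlat.sub_mem hz hm
      rwa [show (z + ω₁ / 2) - q - (z - q) = ω₁ / 2 by ring] at this
  have hK_loc : ∀ z : ℂ, ∃ w : ℂ → ℂ, AnalyticAt ℂ w z ∧ ∀ᶠ x in 𝓝[≠] z, K x = w x := by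
    intro z
    by_cases hz1 : z - q ∈ Tlat ω₁ ω₂ t
    · obtain ⟨G, hG, eG⟩ := hfs_rep z hz1
      have hz2 : (z + ω₁ / 2) - q ∉ Tlat ω₁ ω₂ t := by
        intro hm
        apply hω₁2
        have := Tlat.sub_mem hm hz1
        rwa [show z + ω₁ / 2 - q - (z - q) = ω₁ / 2 by ring] at this
      have h2a := hfs_shift_anal z hz2
      have hval2 : fs (z + ω₁ / 2) = 0 := hvan1 z hz1
      have hha : AnalyticAt ℂ (fun x => G x * fs (x + ω₁ / 2)) z := hG.mul h2a
      have hh0 : G z * fs (z + ω₁ / 2) = 0 := by rw [hval2, mul_zero]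
      have e : ∀ᶠ x in 𝓝[≠] z, K x = (x - z)⁻¹ * (G x * fs (x + ω₁ / 2)) := by
        filter_upwards [eG] with x hx
        simp only [hK_def]
        rw [hx]
        ring
      exact removable_aux hha (by simpa using hh0) e
    · by_cases hz2 : (z + ω₁ / 2) - q ∈ Tlat ω₁ ω₂ t
      · obtain ⟨G, hG, eG⟩ := hfs_rep (z + ω₁ / 2) hz2
        have hmap : Tendsto (fun x : ℂ => x + ω₁ / 2) (𝓝[≠] z) (𝓝[≠] (z + ω₁ / 2)) :=
          tendsto_add_punct z (ω₁ / 2)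
        have etr : ∀ᶠ x in 𝓝[≠] z, fs (x + ω₁ / 2) = (x - z)⁻¹ * G (x + ω₁ / 2) := by
          filter_upwards [hmap.eventually eG] with x hx
          rwa [show x + ω₁ / 2 - (z + ω₁ / 2) = x - z by ring] at hx
        have h1a : AnalyticAt ℂ fs z := hfs_anal z hz1
        have hGsh : AnalyticAt ℂ (fun x => G (x + ω₁ / 2)) z := by
          have h4 : AnalyticAt ℂ (fun x : ℂ => x + ω₁ / 2) z := analyticAt_id.add analyticAt_const
          exact (hG.comp_of_eq h4 rfl : AnalyticAt ℂ (G ∘ fun x => x + ω₁ / 2) z)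
        have hvalz : fs z = 0 := hvan2 z hz2
        have hha : AnalyticAt ℂ (fun x => fs x * G (x + ω₁ / 2)) z := h1a.mul hGsh
        have e : ∀ᶠ x in 𝓝[≠] z, K x = (x - z)⁻¹ * (fs x * G (x + ω₁ / 2)) := by
          filter_upwards [etr] with x hx
          simp only [hK_def]
          rw [hx]
          ring
        exact removable_aux hha (by simp [hvalz]) e
      · refine ⟨K, ?_, Eventually.of_forall fun _ => rfl⟩
        exact (hfs_anal z hz1).mul (hfs_shift_anal z hz2)
  obtain ⟨c', hc'⟩ := periodic_extendable_const h K (hK_per ω₁ hω₁) (hK_per ω₂ hω₂) hK_loc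
  have hc'0 : c' = 0 := by
    have p1 : (q + ω₂ / 2) - q ∉ Tlat ω₁ ω₂ t := by
      rw [show (q + ω₂ / 2) - q = ω₂ / 2 by ring]; exact hω₂2
    have p2 : ((q + ω₂ / 2) + ω₁ / 2) - q ∉ Tlat ω₁ ω₂ t := by
      rw [show ((q + ω₂ / 2) + ω₁ / 2) - q = (ω₁ + ω₂) / 2 by ring]; exact hω₁₂2
    have hcontK : ContinuousAt K (q + ω₂ / 2) :=
      ((hfs_anal _ p1).mul (hfs_shift_anal _ p2)).continuousAt
    have hKval := hc' _ hcontK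
    have z1 : fs (q + ω₂ / 2) = 0 := by
      apply hfs0 (ω₂ / 2) _ hω₂2
      rw [show 2 * (ω₂ / 2) = ω₂ by ring]
      exact ⟨0, 1, 0, by push_cast; ring⟩
    rw [← hKval]
    simp only [hK_def]
    rw [z1, zero_mul]
  -- discreteness near q
  have hcXcont : Continuous fun x : ℂ => |cX h (x - q)| :=
    ((LinearMap.continuous_of_finiteDimensional (cX h)).comp
      (continuous_id.sub continuous_const)).abs
  have hcYcont : Continuous fun x : ℂ => |cY h (x - q)| :=
    ((LinearMap.continuous_of_finiteDimensional (cY h)).comp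
      (continuous_id.sub continuous_const)).abs
  have hsmall : ∀ᶠ x in 𝓝 q, |cX h (x - q)| < 1 / 6 ∧ |cY h (x - q)| < 1 / 6 := by
    have t1 : Tendsto (fun x : ℂ => |cX h (x - q)|) (𝓝 q) (𝓝 0) := by
      have := hcXcont.continuousAt (x := q)
      simpa [ContinuousAt, sub_self] using this
    have t2 : Tendsto (fun x : ℂ => |cY h (x - q)|) (𝓝 q) (𝓝 0) := by
      have := hcYcont.continuousAt (x := q)
      simpa [ContinuousAt, sub_self] using this
    exact (t1.eventually_lt_const (by norm_num)).and (t2.eventually_lt_const (by norm_num))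
  have hcoord_eq : ∀ (x : ℂ) (A B : ℤ), (6 : ℂ) * (x - q) = (A : ℂ) * ω₁ + (B : ℂ) * ω₂ →
      cX h (x - q) = (A : ℝ) / 6 ∧ cY h (x - q) = (B : ℝ) / 6 := by
    intro x A B hE
    have E' : x - q = (((A : ℝ) / 6 : ℝ) : ℂ) * ω₁ + (((B : ℝ) / 6 : ℝ) : ℂ) * ω₂ := by
      push_cast
      linear_combination hE / 6
    constructor
    · have := congrArg (cX h) E'
      rwa [cX_apply h] at this
    · have := congrArg (cY h) E'
      rwa [cY_apply h] at this
  have hnearq : ∀ᶠ x in 𝓝[≠] q, x - q ∉ Tlat ω₁ ω₂ t ∧ (x + ω₁ / 2) - q ∉ Tlat ω₁ ω₂ t := by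
    filter_upwards [nhdsWithin_le_nhds hsmall, self_mem_nhdsWithin] with x hx hxq
    obtain ⟨hx1, hx2⟩ := hx
    have hxq' : x ≠ q := by simpa using hxq
    constructor
    · rintro ⟨m, n, k, hmnk⟩
      have E : (6 : ℂ) * (x - q) = ((6 * m + 2 * k * a : ℤ) : ℂ) * ω₁ + ((6 * n + 2 * k * b : ℤ) : ℂ) * ω₂ := by
        push_cast
        linear_combination 6 * hmnk + 2 * (k : ℂ) * h3t
      obtain ⟨eX, eY⟩ := hcoord_eq x _ _ E
      rw [eX] at hx1
      rw [eY] at hx2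
      have habs : ∀ A : ℤ, |((A : ℝ) / 6)| < 1 / 6 → A = 0 := by
        intro A hA
        rw [abs_div, show |(6 : ℝ)| = 6 by norm_num] at hA
        have h1 : |(A : ℝ)| < 1 := by linarith
        rw [← Int.cast_abs] at h1
        have h2 : |A| < 1 := by exact_mod_cast h1
        exact Int.abs_lt_one_iff.mp h2
      have hA : (6 * m + 2 * k * a : ℤ) = 0 := habs _ hx1
      have hB : (6 * n + 2 * k * b : ℤ) = 0 := habs _ hx2
      -- then x = q
      apply hxq'
      have : (6 : ℂ) * (x - q) = 0 := by
        rw [E, hA, hB]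
        push_cast
        ring
      have h6 : (6 : ℂ) ≠ 0 := by norm_num
      have := mul_eq_zero.mp this
      rcases this with h' | h'
      · exact absurd h' h6
      · linear_combination h'
    · rintro ⟨m, n, k, hmnk⟩
      have E : (6 : ℂ) * (x - q) = ((6 * m + 2 * k * a - 3 : ℤ) : ℂ) * ω₁ + ((6 * n + 2 * k * b : ℤ) : ℂ) * ω₂ := by
        push_cast
        linear_combination 6 * hmnk + 2 * (k : ℂ) * h3t
      obtain ⟨eX, eY⟩ := hcoord_eq x _ _ E
      rw [eX] at hx1
      have habs : ∀ A : ℤ, |((A : ℝ) / 6)| < 1 / 6 → A = 0 := by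
        intro A hA
        rw [abs_div, show |(6 : ℝ)| = 6 by norm_num] at hA
        have h1 : |(A : ℝ)| < 1 := by linarith
        rw [← Int.cast_abs] at h1
        have h2 : |A| < 1 := by exact_mod_cast h1
        exact Int.abs_lt_one_iff.mp h2
      have hA : (6 * m + 2 * k * a - 3 : ℤ) = 0 := habs _ hx1
      have hpar : (2 : ℤ) ∣ 3 := ⟨-(3 * m + k * a) + 3, by linarith⟩
      norm_num at hpar
  -- endgame
  have hqpole : IsPole f q := (hpole q).mpr (by simpa using (Tlat.zero_mem (ω₁ := ω₁) (ω₂ := ω₂) (t := t)))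
  have hbig : ∀ᶠ x in 𝓝[≠] q, ‖c / 2‖ < ‖f x‖ := hqpole.eventually (eventually_gt_atTop _)
  have hev : ∀ᶠ x in 𝓝[≠] q, fs (x + ω₁ / 2) = 0 := by
    filter_upwards [hnearq, hbig] with x hx hx3
    obtain ⟨hx1, hx2⟩ := hx
    have hKx : K x = c' := hc' x ((hfs_anal x hx1).mul (hfs_shift_anal x hx2)).continuousAt
    rw [hc'0] at hKx
    have hfsx : fs x ≠ 0 := by
      intro h0
      have hfx : f x = c / 2 := by
        have := h0
        simp only [hfs_def] at this
        linear_combination this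
      rw [hfx] at hx3
      exact lt_irrefl _ hx3
    have := hKx
    simp only [hK_def] at this
    rcases mul_eq_zero.mp this with h' | h'
    · exact absurd h' hfsx
    · exact h'
  have hev2 : ∀ᶠ y in 𝓝[≠] (q + ω₁ / 2), fs y = 0 := by
    have hmap : Tendsto (fun y : ℂ => y - ω₁ / 2) (𝓝[≠] (q + ω₁ / 2)) (𝓝[≠] q) :=
      tendsto_sub_punct q (ω₁ / 2)
    filter_upwards [hmap.eventually hev] with y hy
    rwa [show y - ω₁ / 2 + ω₁ / 2 = y by ring] at hy
  have hev3 : fs =ᶠ[𝓝 (q + ω₁ / 2)] 0 := by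
    have hpt : fs (q + ω₁ / 2) = 0 := by
      apply hfs0 (ω₁ / 2) _ hω₁2
      rw [show 2 * (ω₁ / 2) = ω₁ by ring]
      exact Tlat.omega1_mem
    have hsup : ∀ᶠ y in 𝓝[≠] (q + ω₁ / 2) ⊔ pure (q + ω₁ / 2), fs y = 0 := by
      rw [eventually_sup]
      exact ⟨hev2, by simpa using hpt⟩
    have := (nhdsNE_sup_pure (q + ω₁ / 2)) ▸ hsup
    filter_upwards [this] with y hy
    simpa using hy
  -- identity theorem
  have hScount : {z : ℂ | z - q ∈ Tlat ω₁ ω₂ t}.Countable := by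
    apply Set.Countable.mono _ (Set.countable_range
      (fun mnk : ℤ × ℤ × ℤ => q + (mnk.1 : ℂ) * ω₁ + (mnk.2.1 : ℂ) * ω₂ + (mnk.2.2 : ℂ) * t))
    rintro z hz
    obtain ⟨m, n, k, hmnk⟩ := hz
    exact ⟨(m, n, k), by simp; linear_combination -hmnk⟩
  have hconn : IsPreconnected {z : ℂ | z - q ∈ Tlat ω₁ ω₂ t}ᶜ :=
    ((hScount.isPathConnected_compl_of_one_lt_rank
      (by rw [Complex.rank_real_complex]; exact Cardinal.one_lt_two)).isConnected).isPreconnected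
  have hAoN : AnalyticOnNhd ℂ fs {z : ℂ | z - q ∈ Tlat ω₁ ω₂ t}ᶜ := fun z hz => hfs_anal z hz
  have hmemz : (q + ω₁ / 2) ∈ {z : ℂ | z - q ∈ Tlat ω₁ ω₂ t}ᶜ := by
    simp only [Set.mem_compl_iff, Set.mem_setOf_eq]
    rwa [show q + ω₁ / 2 - q = ω₁ / 2 by ring]
  have hEq := hAoN.eqOn_zero_of_preconnected_of_eventuallyEq_zero hconn hmemz hev3
  have hfin : ∀ᶠ x in 𝓝[≠] q, False := by
    filter_upwards [hnearq, hbig] with x hx hx3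
    have hz : fs x = 0 := hEq hx.1
    have hfx : f x = c / 2 := by
      simp only [hfs_def] at hz
      linear_combination hz
    rw [hfx] at hx3
    exact lt_irrefl _ hx3
  obtain ⟨x, hx⟩ := hfin.exists
  exact hx

-- ============ new content ============

lemma latticeOf_sub_mem {ω₁ ω₂ : ℂ} {x y : ℂ} (hx : x ∈ latticeOf ω₁ ω₂)
    (hy : y ∈ latticeOf ω₁ ω₂) : x - y ∈ latticeOf ω₁ ω₂ := by
  obtain ⟨m, n, rfl⟩ := hx
  obtain ⟨m', n', rfl⟩ := hy
  exact ⟨m - m', n - n', by push_cast; ring⟩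

lemma latticeOf_add_mem {ω₁ ω₂ : ℂ} {x y : ℂ} (hx : x ∈ latticeOf ω₁ ω₂)
    (hy : y ∈ latticeOf ω₁ ω₂) : x + y ∈ latticeOf ω₁ ω₂ := by
  obtain ⟨m, n, rfl⟩ := hx
  obtain ⟨m', n', rfl⟩ := hy
  exact ⟨m + m', n + n', by push_cast; ring⟩

lemma latticeOf_subset_Tlat {ω₁ ω₂ t : ℂ} {x : ℂ} (hx : x ∈ latticeOf ω₁ ω₂) :
    x ∈ Tlat ω₁ ω₂ t := by
  obtain ⟨m, n, rfl⟩ := hx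
  exact ⟨m, n, 0, by push_cast; ring⟩

lemma Tlat_sub_mem' {ω₁ ω₂ t : ℂ} {z w : ℂ} (hz : z ∈ Tlat ω₁ ω₂ t) (hw : w ∈ Tlat ω₁ ω₂ t) :
    z - w ∈ Tlat ω₁ ω₂ t := by
  obtain ⟨m, n, k, rfl⟩ := hz
  obtain ⟨m', n', k', rfl⟩ := hw
  exact ⟨m - m', n - n', k - k', by push_cast; ring⟩

lemma Tlat_add_mem' {ω₁ ω₂ t : ℂ} {z w : ℂ} (hz : z ∈ Tlat ω₁ ω₂ t) (hw : w ∈ Tlat ω₁ ω₂ t) :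
    z + w ∈ Tlat ω₁ ω₂ t := by
  obtain ⟨m, n, k, rfl⟩ := hz
  obtain ⟨m', n', k', rfl⟩ := hw
  exact ⟨m + m', n + n', k + k', by push_cast; ring⟩

lemma t_mem_Tlat {ω₁ ω₂ t : ℂ} : t ∈ Tlat ω₁ ω₂ t := ⟨0, 0, 1, by push_cast; ring⟩


/-- the translation action of the torus `X = ℂ/Γ` on degree-3
elliptic functions by pre-composition is free: if `f(z - t) = f(z)` for all
`z`, then `t = 0` in `X`, i.e. `t ∈ Γ`. -/
theorem translation_action_free_degree_three (ω₁ ω₂ : ℂ)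
    (h : LinearIndependent ℝ ![ω₁, ω₂]) (f : ℂ → ℂ)
    (hf : MeroOn f)
    (hper₁ : ∀ z, f (z + ω₁) = f z) (hper₂ : ∀ z, f (z + ω₂) = f z)
    (hcont : ∀ p, ¬ IsPole f p → ContinuousAt f p)
    (hdeg : HasDegree ω₁ ω₂ f 3)
    (t : ℂ) (ht : ∀ z : ℂ, f (z - t) = f z) :
    t ∈ latticeOf ω₁ ω₂ := by
  classical
  have hω₁p : ω₁ ∈ periodGroup f := hper₁
  have hω₂p : ω₂ ∈ periodGroup f := hper₂
  have htp : t ∈ periodGroup f := by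
    have hneg : -t ∈ periodGroup f := by
      intro z
      rw [← sub_eq_add_neg]
      exact ht z
    have := (periodGroup f).neg_mem hneg
    simpa using this
  have hlatp : ∀ γ ∈ latticeOf ω₁ ω₂, γ ∈ periodGroup f := by
    rintro γ ⟨m, n, rfl⟩
    have e1 : (m : ℂ) * ω₁ = m • ω₁ := (zsmul_eq_mul ω₁ m).symm
    have e2 : (n : ℂ) * ω₂ = n • ω₂ := (zsmul_eq_mul ω₂ n).symm
    rw [e1, e2]
    exact AddSubgroup.add_mem _ (AddSubgroup.zsmul_mem _ hω₁p m) (AddSubgroup.zsmul_mem _ hω₂p n)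
  obtain ⟨P, hPset, hPsum⟩ := hdeg
  have hPmem : ∀ p : ℂ, p ∈ P ↔ (p ∈ fundDomain ω₁ ω₂ ∧ IsPole f p) := by
    intro p
    constructor
    · intro hp
      have h1 : p ∈ (P : Set ℂ) := hp
      rw [hPset] at h1
      exact h1
    · intro hp
      have h1 : p ∈ {z ∈ fundDomain ω₁ ω₂ | IsPole f z} := hp
      rw [← hPset] at h1
      exact h1
  have hordneg : ∀ p : ℂ, IsPole f p → orderAt f p < 0 ∧ HasOrderAt f p (orderAt f p) := by
    intro p hp
    obtain ⟨n, hn⟩ := hf p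
    rw [orderAt_eq hn]
    refine ⟨?_, hn⟩
    by_contra hge
    exact not_isPole_of_order_nonneg hn (by omega) hp
  set σ : ℂ → ℂ := fun p => reduce h (p + t) with hσ_def
  have hσp : ∀ p ∈ P, σ p ∈ P ∧ orderAt f (σ p) = orderAt f p ∧
      (p + t) - σ p ∈ latticeOf ω₁ ω₂ := by
    intro p hp
    obtain ⟨hpf, hppole⟩ := (hPmem p).mp hp
    have hγ : (p + t) - σ p ∈ latticeOf ω₁ ω₂ := sub_reduce_mem h (p + t)
    have hshift : (σ p) - p ∈ periodGroup f := by
      have h1 : (σ p) - p = t + (-((p + t) - σ p)) := by ring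
      rw [h1]
      exact AddSubgroup.add_mem _ htp (AddSubgroup.neg_mem _ (hlatp _ hγ))
    have hpole2 : IsPole f (σ p) := by
      have h2 := isPole_shift hshift hppole
      rwa [show p + (σ p - p) = σ p by ring] at h2
    refine ⟨(hPmem _).mpr ⟨reduce_mem h _, hpole2⟩, ?_, hγ⟩
    obtain ⟨n, hn⟩ := hf p
    have h2 := hasOrderAt_shift hshift hn
    rw [show p + (σ p - p) = σ p by ring] at h2
    rw [orderAt_eq hn, orderAt_eq h2]
  by_cases hfix : ∃ p ∈ P, σ p = p
  · obtain ⟨p, hp, hfp⟩ := hfix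
    have h1 := (hσp p hp).2.2
    rwa [hfp, show (p + t) - p = t by ring] at h1
  · exfalso
    push_neg at hfix
    have hinj : ∀ p ∈ P, ∀ p' ∈ P, σ p = σ p' → p = p' := by
      intro p hp p' hp' he
      have h1 := (hσp p hp).2.2
      have h2 := (hσp p' hp').2.2
      rw [he] at h1
      have h3 : p - p' ∈ latticeOf ω₁ ω₂ := by
        have := latticeOf_sub_mem h1 h2
        rwa [show (p + t - σ p') - (p' + t - σ p') = p - p' by ring] at this
      exact fundDomain_unique h ((hPmem p).mp hp).1 ((hPmem p').mp hp').1 h3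
    have hord1 : ∀ p ∈ P, 1 ≤ (orderAt f p).natAbs := by
      intro p hp
      obtain ⟨hlt, _⟩ := hordneg p ((hPmem p).mp hp).2
      omega
    have hcard : P.card ≤ 3 := by
      rw [← hPsum]
      calc P.card = ∑ _p ∈ P, 1 := by simp
      _ ≤ ∑ p ∈ P, (orderAt f p).natAbs := Finset.sum_le_sum (fun p hp => hord1 p hp)
    -- the cyclic case contradiction, as a reusable block
    have main : ∀ x1 x2 x3 : ℂ, x1 ≠ x2 → x1 ≠ x3 → x2 ≠ x3 → P = {x1, x2, x3} →
        σ x1 = x2 → σ x2 = x3 → σ x3 = x1 → False := by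
      intro x1 x2 x3 h12 h13 h23 hP3 s1 s2 s3
      have hx1 : x1 ∈ P := by rw [hP3]; simp
      have hx2 : x2 ∈ P := by rw [hP3]; simp
      have hx3 : x3 ∈ P := by rw [hP3]; simp
      -- all orders are -1
      have hsum3 : (orderAt f x1).natAbs + ((orderAt f x2).natAbs + (orderAt f x3).natAbs) = 3 := by
        rw [hP3] at hPsum
        rw [Finset.sum_insert (by simp [h12, h13]), Finset.sum_insert (by simp [h23]),
          Finset.sum_singleton] at hPsum
        exact hPsum
      have hordm1 : ∀ p ∈ P, HasOrderAt f p (-1) := by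
        intro p hp
        obtain ⟨hlt, hord⟩ := hordneg p ((hPmem p).mp hp).2
        have h1 : (orderAt f p).natAbs = 1 := by
          have e1 := hord1 x1 hx1
          have e2 := hord1 x2 hx2
          have e3 := hord1 x3 hx3
          have : p = x1 ∨ p = x2 ∨ p = x3 := by
            have := hp
            rw [hP3] at this
            simpa using this
          rcases this with rfl | rfl | rfl <;> omega
        have h2 : orderAt f p = -1 := by omega
        rwa [h2] at hord
      -- lattice relations
      have r1 : (x1 + t) - x2 ∈ latticeOf ω₁ ω₂ := by
        have := (hσp x1 hx1).2.2; rwa [s1] at this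
      have r2 : (x2 + t) - x3 ∈ latticeOf ω₁ ω₂ := by
        have := (hσp x2 hx2).2.2; rwa [s2] at this
      have r3 : (x3 + t) - x1 ∈ latticeOf ω₁ ω₂ := by
        have := (hσp x3 hx3).2.2; rwa [s3] at this
      have h3tl : (3 : ℂ) * t ∈ latticeOf ω₁ ω₂ := by
        have := latticeOf_add_mem (latticeOf_add_mem r1 r2) r3
        rwa [show ((x1 + t) - x2) + ((x2 + t) - x3) + ((x3 + t) - x1) = 3 * t by ring] at this
      obtain ⟨A, B, h3t⟩ := h3tl
      -- Tlat membership of the differences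
      have d2 : x2 - x1 ∈ Tlat ω₁ ω₂ t := by
        have := Tlat_sub_mem' (t_mem_Tlat (ω₁ := ω₁) (ω₂ := ω₂) (t := t)) (latticeOf_subset_Tlat r1)
        rwa [show t - ((x1 + t) - x2) = x2 - x1 by ring] at this
      have d3 : x3 - x1 ∈ Tlat ω₁ ω₂ t := by
        have h5 : x3 - x2 ∈ Tlat ω₁ ω₂ t := by
          have := Tlat_sub_mem' (t_mem_Tlat (ω₁ := ω₁) (ω₂ := ω₂) (t := t)) (latticeOf_subset_Tlat r2)
          rwa [show t - ((x2 + t) - x3) = x3 - x2 by ring] at this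
        have := Tlat_add_mem' h5 d2
        rwa [show (x3 - x2) + (x2 - x1) = x3 - x1 by ring] at this
      -- pole characterization
      have hTper : ∀ τ ∈ Tlat ω₁ ω₂ t, τ ∈ periodGroup f := by
        rintro τ ⟨m, n, k, rfl⟩
        have e1 : (m : ℂ) * ω₁ = m • ω₁ := (zsmul_eq_mul ω₁ m).symm
        have e2 : (n : ℂ) * ω₂ = n • ω₂ := (zsmul_eq_mul ω₂ n).symm
        have e3 : (k : ℂ) * t = k • t := (zsmul_eq_mul t k).symm
        rw [e1, e2, e3]
        exact AddSubgroup.add_mem _ (AddSubgroup.add_mem _ (AddSubgroup.zsmul_mem _ hω₁p m)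
          (AddSubgroup.zsmul_mem _ hω₂p n)) (AddSubgroup.zsmul_mem _ htp k)
      have hpolechar : ∀ w : ℂ, IsPole f w ↔ w - x1 ∈ Tlat ω₁ ω₂ t := by
        intro w
        constructor
        · intro hw
          have hred : IsPole f (reduce h w) := by
            have hsh : reduce h w - w ∈ periodGroup f := by
              have := hlatp _ (sub_reduce_mem h w)
              have h6 := AddSubgroup.neg_mem _ this
              rwa [show -(w - reduce h w) = reduce h w - w by ring] at h6
            have := isPole_shift hsh hw
            rwa [show w + (reduce h w - w) = reduce h w by ring] at this
          have hredP : reduce h w ∈ P := (hPmem _).mpr ⟨reduce_mem h w, hred⟩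
          have hcases : reduce h w = x1 ∨ reduce h w = x2 ∨ reduce h w = x3 := by
            have := hredP
            rw [hP3] at this
            simpa using this
          have hwr : w - reduce h w ∈ Tlat ω₁ ω₂ t := latticeOf_subset_Tlat (sub_reduce_mem h w)
          have hrx : reduce h w - x1 ∈ Tlat ω₁ ω₂ t := by
            rcases hcases with he | he | he
            · rw [he, sub_self]; exact ⟨0, 0, 0, by push_cast; ring⟩
            · rw [he]; exact d2
            · rw [he]; exact d3
          have := Tlat_add_mem' hwr hrx
          rwa [show (w - reduce h w) + (reduce h w - x1) = w - x1 by ring] at this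
        · intro hw
          have hx1pole : IsPole f x1 := ((hPmem x1).mp hx1).2
          have := isPole_shift (hTper _ hw) hx1pole
          rwa [show x1 + (w - x1) = w by ring] at this
      have hordchar : ∀ w : ℂ, IsPole f w → HasOrderAt f w (-1) := by
        intro w hw
        have hred : reduce h w ∈ P := by
          refine (hPmem _).mpr ⟨reduce_mem h w, ?_⟩
          have hsh : reduce h w - w ∈ periodGroup f := by
            have := hlatp _ (sub_reduce_mem h w)
            have h6 := AddSubgroup.neg_mem _ this
            rwa [show -(w - reduce h w) = reduce h w - w by ring] at h6
          have := isPole_shift hsh hw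
          rwa [show w + (reduce h w - w) = reduce h w by ring] at this
        have h7 := hordm1 _ hred
        have hsh : w - reduce h w ∈ periodGroup f := hlatp _ (sub_reduce_mem h w)
        have := hasOrderAt_shift hsh h7
        rwa [show reduce h w + (w - reduce h w) = w by ring] at this
      exact no_simple_lattice_poles h f hf hcont hω₁p hω₂p htp h3t hpolechar hordchar
    -- case analysis on the number of poles
    have hc03 : P.card = 0 ∨ P.card = 1 ∨ P.card = 2 ∨ P.card = 3 := by omega
    rcases hc03 with h0 | h1 | h2 | h3
    · rw [Finset.card_eq_zero.mp h0] at hPsum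
      simp at hPsum
    · obtain ⟨p, hp⟩ := Finset.card_eq_one.mp h1
      have hpP : p ∈ P := by rw [hp]; exact Finset.mem_singleton_self p
      have h4 := (hσp p hpP).1
      rw [hp] at h4
      exact hfix p hpP (Finset.mem_singleton.mp h4)
    · obtain ⟨x, y, hxy, hPxy⟩ := Finset.card_eq_two.mp h2
      have hx : x ∈ P := by rw [hPxy]; simp
      have hy : y ∈ P := by rw [hPxy]; simp
      have hσx : σ x = y := by
        have hm := (hσp x hx).1
        rw [hPxy] at hm
        rcases Finset.mem_insert.mp hm with he | he
        · exact absurd he (hfix x hx)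
        · exact Finset.mem_singleton.mp he
      have e1 : orderAt f (σ x) = orderAt f x := (hσp x hx).2.1
      rw [hσx] at e1
      rw [hPxy, Finset.sum_insert (by simp [hxy]), Finset.sum_singleton, e1] at hPsum
      have l1 := hord1 x hx
      omega
    · obtain ⟨x, y, z, hxy, hxz, hyz, hPxyz⟩ := Finset.card_eq_three.mp h3
      have hx : x ∈ P := by rw [hPxyz]; simp
      have hy : y ∈ P := by rw [hPxyz]; simp
      have hz : z ∈ P := by rw [hPxyz]; simp
      have hmem3 : ∀ p ∈ P, p = x ∨ p = y ∨ p = z := by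
        intro p hp
        have := hp
        rw [hPxyz] at this
        simpa using this
      rcases hmem3 _ (hσp x hx).1 with e1 | e1 | e1
      · exact hfix x hx e1
      · -- σ x = y
        have hσy : σ y = z := by
          rcases hmem3 _ (hσp y hy).1 with e2 | e2 | e2
          · -- σ y = x : then σ z has nowhere to go
            exfalso
            rcases hmem3 _ (hσp z hz).1 with e3 | e3 | e3
            · exact hyz (hinj y hy z hz (by rw [e2, e3]))
            · exact hxz (hinj x hx z hz (by rw [e1, e3]))
            · exact hfix z hz e3
          · exact absurd e2 (hfix y hy)
          · exact e2
        have hσz : σ z = x := by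
          rcases hmem3 _ (hσp z hz).1 with e3 | e3 | e3
          · exact e3
          · exact absurd (hinj x hx z hz (by rw [e1, e3])) hxz
          · exact absurd e3 (hfix z hz)
        exact main x y z hxy hxz hyz hPxyz e1 hσy hσz
      · -- σ x = z
        have hσz : σ z = y := by
          rcases hmem3 _ (hσp z hz).1 with e2 | e2 | e2
          · -- σ z = x
            exfalso
            rcases hmem3 _ (hσp y hy).1 with e3 | e3 | e3
            · exact hyz (hinj y hy z hz (by rw [e3, e2]))
            · exact hfix y hy e3
            · exact hxy (hinj x hx y hy (by rw [e1, e3]))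
          · exact e2
          · exact absurd e2 (hfix z hz)
        have hσy : σ y = x := by
          rcases hmem3 _ (hσp y hy).1 with e3 | e3 | e3
          · exact e3
          · exact absurd e3 (hfix y hy)
          · exact absurd (hinj x hx y hy (by rw [e1, e3])).symm hxy.symm
        have hP' : P = {x, z, y} := by
          rw [hPxyz]
          ext w
          simp only [Finset.mem_insert, Finset.mem_singleton]
          tauto
        exact main x z y hxz hxy (Ne.symm hyz) hP' e1 hσz hσy
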